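/- Let X be an integrable real random variable with E[X] = 0 and P(|X| > t) ≤ min{1, 2e^{-t}} for all t ≥ 0, and let L be a standard Laplace random variable (density (1/2)e^{-|x|} on ℝ). Then X ⪯_cx c_E·L, i.e., E[f(X)] ≤ E[f(c_E·L)] for every convex f : ℝ → ℝ for which both expectations are finite, where c_E is the sharp sub-exponential comparison constant. -/

import Mathlib

open MeasureTheory Real Set Filter

/-- The standard Laplace law on `ℝ`, with density `(1/2)e^{-|x|}` w.r.t. Lebesgue measure. -/
noncomputable def laplaceMeasure : Measure ℝ :=
  (volume : Measure ℝ).withDensity fun x => ENNReal.ofReal ((1 / 2) * Real.exp (-|x|))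

/-- The sub-exponential tail envelope `s_E(t) = min{1, 2e^{-t}}`. -/
noncomputable def sE (t : ℝ) : ℝ := min 1 (2 * Real.exp (-t))

/-- `A_E = ∫₀^∞ s_E(t) dt`. -/
noncomputable def AE : ℝ := ∫ t in Set.Ioi (0 : ℝ), sE t

/-- `H_E(x) = x s_E(x) + ∫_x^∞ s_E(t) dt`. -/
noncomputable def HE (x : ℝ) : ℝ := x * sE x + ∫ t in Set.Ioi x, sE t

lemma sE_nonneg (t : ℝ) : 0 ≤ sE t := le_min one_pos.le (by positivity)

lemma sE_le_exp (t : ℝ) : sE t ≤ 2 * Real.exp (-t) := min_le_right _ _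

lemma sE_le_one (t : ℝ) : sE t ≤ 1 := min_le_left _ _

lemma sE_of_le {t : ℝ} (ht : t ≤ Real.log 2) : sE t = 1 := by
  have : (1:ℝ) ≤ 2 * Real.exp (-t) := by
    have e1 : Real.exp (-t) * Real.exp t = 1 := by rw [← Real.exp_add]; simp
    have e2 : Real.exp t ≤ 2 := by
      rw [← Real.exp_log two_pos]; exact Real.exp_le_exp.2 ht
    nlinarith [Real.exp_pos (-t), Real.exp_pos t]
  simp [sE, min_eq_left this]

lemma sE_of_ge {t : ℝ} (ht : Real.log 2 ≤ t) : sE t = 2 * Real.exp (-t) := by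
  have : 2 * Real.exp (-t) ≤ 1 := by
    have e1 : Real.exp (-t) * Real.exp t = 1 := by rw [← Real.exp_add]; simp
    have e2 : (2:ℝ) ≤ Real.exp t := by
      rw [← Real.exp_log two_pos]; exact Real.exp_le_exp.2 ht
    nlinarith [Real.exp_pos (-t)]
  simp [sE, min_eq_right this]

lemma sE_continuous : Continuous sE :=
  continuous_const.min (continuous_const.mul (Real.continuous_exp.comp continuous_neg))

lemma integrableOn_sE (x : ℝ) : IntegrableOn sE (Set.Ioi x) := by
  have h2 : IntegrableOn (fun t => 2 * Real.exp (-t)) (Set.Ioi x) := by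
    have := (exp_neg_integrableOn_Ioi x (b := 1) one_pos).const_mul 2
    simpa [IntegrableOn] using this
  refine h2.mono' (sE_continuous.aestronglyMeasurable.restrict) ?_
  filter_upwards with t
  rw [Real.norm_eq_abs, abs_of_nonneg (sE_nonneg t)]
  exact sE_le_exp t

lemma integral_sE_Ioi_of_ge {x : ℝ} (hx : Real.log 2 ≤ x) :
    ∫ t in Set.Ioi x, sE t = 2 * Real.exp (-x) := by
  rw [setIntegral_congr_fun measurableSet_Ioi
    (fun t ht => sE_of_ge (hx.trans (le_of_lt ht)))]
  rw [integral_const_mul, integral_exp_neg_Ioi]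

lemma integral_sE_Ioi_of_le {x : ℝ} (hx : x ≤ Real.log 2) :
    ∫ t in Set.Ioi x, sE t = (Real.log 2 - x) + 1 := by
  have hsplit : Set.Ioc x (Real.log 2) ∪ Set.Ioi (Real.log 2) = Set.Ioi x :=
    Set.Ioc_union_Ioi_eq_Ioi hx
  have hdisj : Disjoint (Set.Ioc x (Real.log 2)) (Set.Ioi (Real.log 2)) :=
    Set.Ioc_disjoint_Ioi le_rfl
  rw [← hsplit, setIntegral_union hdisj measurableSet_Ioi
      ((integrableOn_sE x).mono_set (by rw [← hsplit]; exact Set.subset_union_left))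
      (integrableOn_sE _)]
  rw [setIntegral_congr_fun measurableSet_Ioc (fun t ht => sE_of_le ht.2),
    integral_sE_Ioi_of_ge le_rfl]
  rw [Real.exp_neg, Real.exp_log two_pos]
  simp only [integral_const, MeasurableSet.univ, Measure.restrict_apply, Set.univ_inter,
    Real.volume_Ioc, smul_eq_mul, mul_one]
  simp only [Measure.real, Measure.restrict_apply MeasurableSet.univ, Set.univ_inter, Real.volume_Ioc]
  rw [ENNReal.toReal_ofReal (by linarith : (0:ℝ) ≤ Real.log 2 - x)]
  norm_num

lemma AE_eq : AE = Real.log 2 + 1 := by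
  rw [AE, integral_sE_Ioi_of_le (Real.log_nonneg one_le_two)]
  ring

section consts
variable {aE pE wE cE : ℝ}

lemma log2_le_aE (hHaE : HE aE = AE / 2) : Real.log 2 ≤ aE := by
  by_contra h
  push_neg at h
  have h1 : HE aE = AE := by
    rw [HE, sE_of_le h.le, integral_sE_Ioi_of_le h.le, AE_eq]; ring
  rw [h1, AE_eq] at hHaE
  have := Real.log_nonneg (by norm_num : (1:ℝ) ≤ 2)
  linarith

lemma pE_pos (hpE : pE = 2 * Real.exp (-aE)) : 0 < pE := by
  rw [hpE]; positivity

lemma B_eq (haE : 0 < aE) (hHaE : HE aE = AE / 2) (hpE : pE = 2 * Real.exp (-aE)) :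
    AE / 2 = pE * (aE + 1) := by
  have hl := log2_le_aE hHaE
  rw [← hHaE, HE, sE_of_ge hl, integral_sE_Ioi_of_ge hl, hpE]; ring

lemma wE_eq (hpE : pE = 2 * Real.exp (-aE)) (hwE : wE = Real.log (1 / (2 * pE))) :
    wE = aE - Real.log 4 := by
  rw [hwE, hpE]
  have h : (1:ℝ) / (2 * (2 * Real.exp (-aE))) = Real.exp aE / 4 := by
    rw [Real.exp_neg]
    field_simp
    norm_num
  rw [h, Real.log_div (Real.exp_ne_zero _) (by norm_num), Real.log_exp]

lemma log4_lt (haE : 0 < aE) (hHaE : HE aE = AE / 2) : Real.log 4 < aE + 1 := by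
  have hl := log2_le_aE hHaE
  have h4 : Real.log 4 = 2 * Real.log 2 := by
    rw [show (4:ℝ) = 2^2 by norm_num, Real.log_pow]; push_cast; ring
  have := Real.log_two_lt_d9
  linarith

lemma onewE_pos (haE : 0 < aE) (hHaE : HE aE = AE / 2) (hpE : pE = 2 * Real.exp (-aE))
    (hwE : wE = Real.log (1 / (2 * pE))) : 0 < 1 + wE := by
  rw [wE_eq hpE hwE]
  have := log4_lt haE hHaE
  linarith

lemma cE_eq (haE : 0 < aE) (hHaE : HE aE = AE / 2) (hpE : pE = 2 * Real.exp (-aE))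
    (hwE : wE = Real.log (1 / (2 * pE))) (hcE : cE = (AE / 2) / (pE * (1 + wE))) :
    cE = (aE + 1) / (1 + wE) := by
  rw [hcE, B_eq haE hHaE hpE]
  rw [mul_comm pE (1+wE), mul_comm pE (aE+1), mul_div_mul_right _ _ (pE_pos hpE).ne']

lemma cE_ge_one (haE : 0 < aE) (hHaE : HE aE = AE / 2) (hpE : pE = 2 * Real.exp (-aE))
    (hwE : wE = Real.log (1 / (2 * pE))) (hcE : cE = (AE / 2) / (pE * (1 + wE))) :
    1 ≤ cE := by
  rw [cE_eq haE hHaE hpE hwE hcE]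
  rw [le_div_iff₀ (onewE_pos haE hHaE hpE hwE), one_mul, wE_eq hpE hwE]
  have : 0 < Real.log 4 := Real.log_pos (by norm_num)
  linarith

lemma cE_pos (haE : 0 < aE) (hHaE : HE aE = AE / 2) (hpE : pE = 2 * Real.exp (-aE))
    (hwE : wE = Real.log (1 / (2 * pE))) (hcE : cE = (AE / 2) / (pE * (1 + wE))) :
    0 < cE := lt_of_lt_of_le one_pos (cE_ge_one haE hHaE hpE hwE hcE)

lemma cE_identity (haE : 0 < aE) (hHaE : HE aE = AE / 2) (hpE : pE = 2 * Real.exp (-aE))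
    (hwE : wE = Real.log (1 / (2 * pE))) (hcE : cE = (AE / 2) / (pE * (1 + wE))) :
    cE * (pE * (1 + wE)) = AE / 2 := by
  rw [hcE, div_mul_cancel₀]
  exact (mul_pos (pE_pos hpE) (onewE_pos haE hHaE hpE hwE)).ne'

/-- The tangent-line bound: the line `B - pE t` lies below `(cE/2) e^{-t/cE}`. -/
lemma tangent_bound (haE : 0 < aE) (hHaE : HE aE = AE / 2) (hpE : pE = 2 * Real.exp (-aE))
    (hwE : wE = Real.log (1 / (2 * pE))) (hcE : cE = (AE / 2) / (pE * (1 + wE))) (t : ℝ) :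
    AE / 2 - pE * t ≤ cE / 2 * Real.exp (-t / cE) := by
  have hp := pE_pos hpE
  have hc := cE_pos haE hHaE hpE hwE hcE
  have hew : Real.exp wE = 1 / (2 * pE) := by
    rw [hwE, Real.exp_log (by positivity)]
  have key : (wE - t / cE) + 1 ≤ Real.exp (wE - t / cE) := Real.add_one_le_exp _
  have hsplit : Real.exp (wE - t / cE) = Real.exp wE * Real.exp (-t / cE) := by
    rw [← Real.exp_add]; ring_nf
  rw [hsplit, hew] at key
  have hB := cE_identity haE hHaE hpE hwE hcE
  have hepos : 0 < Real.exp (-t / cE) := Real.exp_pos _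
  -- multiply key by cE * pE > 0
  have := mul_le_mul_of_nonneg_left key (by positivity : (0:ℝ) ≤ cE * pE)
  have hne : (2 * pE) ≠ 0 := by positivity
  calc AE / 2 - pE * t = cE * pE * (1 + wE) - pE * t := by rw [← hB]; ring
    _ ≤ cE * pE * ((wE - t / cE) + 1) := by
        have : cE * pE * (t / cE) = pE * t := by field_simp
        nlinarith [this]
    _ ≤ cE * pE * (1 / (2 * pE) * Real.exp (-t / cE)) := this
    _ = cE / 2 * Real.exp (-t / cE) := by field_simp

lemma pE_le_exp_aE (haE : 0 < aE) (hHaE : HE aE = AE / 2) (hpE : pE = 2 * Real.exp (-aE))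
    (hwE : wE = Real.log (1 / (2 * pE))) (hcE : cE = (AE / 2) / (pE * (1 + wE))) :
    pE ≤ cE / 2 * Real.exp (-aE / cE) := by
  have h := tangent_bound haE hHaE hpE hwE hcE aE
  have hB := B_eq haE hHaE hpE
  calc pE = AE / 2 - pE * aE := by rw [hB]; ring
    _ ≤ _ := h

lemma exp_tail_bound (haE : 0 < aE) (hHaE : HE aE = AE / 2) (hpE : pE = 2 * Real.exp (-aE))
    (hwE : wE = Real.log (1 / (2 * pE))) (hcE : cE = (AE / 2) / (pE * (1 + wE)))
    {t : ℝ} (ht : aE ≤ t) : 2 * Real.exp (-t) ≤ cE / 2 * Real.exp (-t / cE) := by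
  have hc1 := cE_ge_one haE hHaE hpE hwE hcE
  have hc := cE_pos haE hHaE hpE hwE hcE
  have h1 : 2 * Real.exp (-t) = pE * Real.exp (aE - t) := by
    rw [hpE, mul_assoc, ← Real.exp_add]
    congr 2
    ring
  have h2 : Real.exp (aE - t) ≤ Real.exp ((aE - t) / cE) := by
    apply Real.exp_le_exp.2
    rw [le_div_iff₀ hc]
    nlinarith
  have h3 : cE / 2 * Real.exp (-t / cE) = (cE / 2 * Real.exp (-aE / cE)) * Real.exp ((aE - t) / cE) := by
    rw [mul_assoc, ← Real.exp_add]
    congr 2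
    field_simp
    ring
  rw [h1, h3]
  have hp := pE_le_exp_aE haE hHaE hpE hwE hcE
  exact mul_le_mul hp h2 (Real.exp_pos _).le (by positivity)
end consts


section consts
variable {aE pE wE cE : ℝ}
lemma hinge_integrable {Ω : Type*} [MeasurableSpace Ω] {μ : Measure Ω} [IsFiniteMeasure μ]
    {Z : Ω → ℝ} (h : Integrable Z μ) (t : ℝ) :
    Integrable (fun ω => max (Z ω - t) 0) μ := by
  have cont : Continuous fun z : ℝ => max (z - t) 0 :=
    (continuous_id.sub continuous_const).max continuous_const
  refine Integrable.mono' (h.abs.add (integrable_const |t|))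
    (cont.comp_aestronglyMeasurable h.aestronglyMeasurable) ?_
  filter_upwards with ω
  simp only [Real.norm_eq_abs]
  rw [abs_of_nonneg (le_max_right _ _)]
  have h1 : max (Z ω - t) 0 ≤ |Z ω - t| := max_le (le_abs_self _) (abs_nonneg _)
  have h2 : |Z ω - t| ≤ |Z ω| + |t| := by
    rw [sub_eq_add_neg]
    exact (abs_add_le _ _).trans (by rw [abs_neg])
  show max (Z ω - t) 0 ≤ |Z ω| + |t|
  exact h1.trans h2

lemma integral_Ioi_comp_add (g : ℝ → ℝ) (u : ℝ) :
    ∫ t in Set.Ioi (0:ℝ), g (u + t) = ∫ t in Set.Ioi u, g t := by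
  have A : MeasurableEmbedding (fun t : ℝ => u + t) :=
    (Homeomorph.addLeft u).measurableEmbedding
  have h := A.setIntegral_map (μ := (volume : Measure ℝ)) g (Set.Ioi u)
  rw [map_add_left_eq_self] at h
  have hpre : (fun t : ℝ => u + t) ⁻¹' Set.Ioi u = Set.Ioi 0 := by
    ext t
    simp [Set.mem_preimage, Set.mem_Ioi]
  rw [hpre] at h
  exact h.symm

/-- Main tail comparison: expected hinge of `Z` is dominated by the Laplace value. -/
lemma hinge_bound (haE : 0 < aE) (hHaE : HE aE = AE / 2) (hpE : pE = 2 * Real.exp (-aE))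
    (hwE : wE = Real.log (1 / (2 * pE))) (hcE : cE = (AE / 2) / (pE * (1 + wE)))
    {Ω : Type*} [MeasurableSpace Ω] (μ : Measure Ω) [IsProbabilityMeasure μ]
    (Z : Ω → ℝ) (hZm : Measurable Z) (hZint : Integrable Z μ)
    (hmean : ∫ ω, Z ω ∂μ = 0)
    (htail : ∀ t : ℝ, 0 ≤ t → μ {ω | t < |Z ω|} ≤ ENNReal.ofReal (sE t))
    {u : ℝ} (hu : 0 ≤ u) :
    ∫ ω, max (Z ω - u) 0 ∂μ ≤ cE / 2 * Real.exp (-u / cE) := by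
  classical
  set q : ℝ → ℝ := fun t => (μ {ω | t < Z ω}).toReal with hq_def
  set m : ℝ → ℝ := fun t => (μ {ω | t < -Z ω}).toReal with hm_def
  have hq_anti : Antitone q := by
    intro s t hst
    exact ENNReal.toReal_mono (measure_ne_top μ _)
      (measure_mono (fun ω h => lt_of_le_of_lt hst h))
  have hm_anti : Antitone m := by
    intro s t hst
    exact ENNReal.toReal_mono (measure_ne_top μ _)
      (measure_mono (fun ω h => lt_of_le_of_lt hst h))
  have hq0 : ∀ t, 0 ≤ q t := fun t => ENNReal.toReal_nonneg
  have hqs : ∀ t : ℝ, 0 ≤ t → q t ≤ sE t := by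
    intro t ht
    have hsub : {ω | t < Z ω} ⊆ {ω | t < |Z ω|} := by
      intro ω h
      simp only [Set.mem_setOf_eq] at h ⊢
      exact lt_of_lt_of_le h (le_abs_self _)
    have h1 : μ {ω | t < Z ω} ≤ ENNReal.ofReal (sE t) :=
      le_trans (measure_mono hsub) (htail t ht)
    exact ENNReal.toReal_le_of_le_ofReal (sE_nonneg t) h1
  have hms : ∀ t : ℝ, 0 ≤ t → m t ≤ sE t := by
    intro t ht
    have hsub : {ω | t < -Z ω} ⊆ {ω | t < |Z ω|} := by
      intro ω h
      simp only [Set.mem_setOf_eq] at h ⊢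
      exact lt_of_lt_of_le h (neg_le_abs _)
    have h1 : μ {ω | t < -Z ω} ≤ ENNReal.ofReal (sE t) :=
      le_trans (measure_mono hsub) (htail t ht)
    exact ENNReal.toReal_le_of_le_ofReal (sE_nonneg t) h1
  have hqint : ∀ x : ℝ, 0 ≤ x → IntegrableOn q (Set.Ioi x) := by
    intro x hx
    refine (integrableOn_sE x).mono' (hq_anti.measurable.aestronglyMeasurable.restrict) ?_
    rw [ae_restrict_iff' measurableSet_Ioi]
    filter_upwards with t ht
    rw [Real.norm_eq_abs, abs_of_nonneg (hq0 t)]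
    exact hqs t (hx.trans ht.le)
  have hmint : IntegrableOn m (Set.Ioi 0) := by
    refine (integrableOn_sE 0).mono' (hm_anti.measurable.aestronglyMeasurable.restrict) ?_
    rw [ae_restrict_iff' measurableSet_Ioi]
    filter_upwards with t ht
    rw [Real.norm_eq_abs, abs_of_nonneg ENNReal.toReal_nonneg]
    exact hms t ht.le
  -- layer cake for the hinge at u
  have layer : ∀ v : ℝ, ∫ ω, max (Z ω - v) 0 ∂μ = ∫ t in Set.Ioi (0:ℝ), q (v + t) := by
    intro v
    rw [(hinge_integrable hZint v).integral_eq_integral_meas_lt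
      (Eventually.of_forall fun ω => le_max_right _ _)]
    refine setIntegral_congr_fun measurableSet_Ioi (fun t ht => ?_)
    have hset : {a : Ω | t < max (Z a - v) 0} = {ω : Ω | v + t < Z ω} := by
      ext ω
      simp only [Set.mem_setOf_eq]
      constructor
      · intro h
        rcases lt_max_iff.1 h with h' | h'
        · linarith
        · exact absurd h' (not_lt.2 ht.le)
      · intro h
        exact lt_max_iff.2 (Or.inl (by linarith))
    rw [hset]
    rfl
  have layer' : ∀ v : ℝ, ∫ ω, max (Z ω - v) 0 ∂μ = ∫ t in Set.Ioi v, q t := by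
    intro v
    rw [layer v, integral_Ioi_comp_add]
  -- the negative part
  have hint2 : Integrable (fun ω => max (-Z ω - 0) 0) μ := hinge_integrable hZint.neg 0
  have layerm : ∫ ω, max (-Z ω - 0) 0 ∂μ = ∫ t in Set.Ioi (0:ℝ), m t := by
    rw [hint2.integral_eq_integral_meas_lt
      (Eventually.of_forall fun ω => le_max_right _ _)]
    refine setIntegral_congr_fun measurableSet_Ioi (fun t ht => ?_)
    have hset : {a : Ω | t < max (-Z a - 0) 0} = {ω : Ω | t < -Z ω} := by
      ext ω
      simp only [Set.mem_setOf_eq]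
      constructor
      · intro h
        rcases lt_max_iff.1 h with h' | h'
        · linarith
        · exact absurd h' (not_lt.2 ht.le)
      · intro h
        exact lt_max_iff.2 (Or.inl (by linarith))
    rw [hset]
    rfl
  -- equal positive and negative masses
  have hqm_eq : ∫ t in Set.Ioi (0:ℝ), q t = ∫ t in Set.Ioi (0:ℝ), m t := by
    have heq : ∀ ω, max (Z ω - 0) 0 - max (-Z ω - 0) 0 = Z ω := by
      intro ω
      rcases le_total (Z ω) 0 with h | h
      · rw [max_eq_right (by linarith), max_eq_left (by linarith)]; ring
      · rw [max_eq_left (by linarith), max_eq_right (by linarith)]; ring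
    have h1 : (∫ ω, max (Z ω - 0) 0 ∂μ) - (∫ ω, max (-Z ω - 0) 0 ∂μ) = 0 := by
      rw [← integral_sub (hinge_integrable hZint 0) hint2]
      show ∫ ω, (max (Z ω - 0) 0 - max (-Z ω - 0) 0) ∂μ = 0
      rw [integral_congr_ae (Eventually.of_forall heq)]
      exact hmean
    rw [layer' 0, layerm] at h1
    linarith
  -- budget: ∫ q over (0,∞) is at most AE/2
  have budget : ∫ t in Set.Ioi (0:ℝ), q t ≤ AE / 2 := by
    have hsum : ∀ t : ℝ, 0 < t → q t + m t ≤ sE t := by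
      intro t ht
      have hdisj : Disjoint {ω | t < Z ω} {ω | t < -Z ω} := by
        rw [Set.disjoint_left]
        intro ω h1 h2
        simp only [Set.mem_setOf_eq] at h1 h2
        linarith
      have hunion : μ {ω | t < Z ω} + μ {ω | t < -Z ω}
          = μ ({ω | t < Z ω} ∪ {ω | t < -Z ω}) :=
        (measure_union hdisj (hZm.neg measurableSet_Ioi)).symm
      have hsub : ({ω | t < Z ω} ∪ {ω | t < -Z ω}) ⊆ {ω | t < |Z ω|} := by
        rintro ω (h | h) <;> simp only [Set.mem_setOf_eq] at h ⊢
        · exact lt_of_lt_of_le h (le_abs_self _)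
        · exact lt_of_lt_of_le h (neg_le_abs _)
      have hle : μ ({ω | t < Z ω} ∪ {ω | t < -Z ω}) ≤ ENNReal.ofReal (sE t) :=
        le_trans (measure_mono hsub) (htail t ht.le)
      have hadd : q t + m t = (μ {ω | t < Z ω} + μ {ω | t < -Z ω}).toReal :=
        (ENNReal.toReal_add (measure_ne_top μ _) (measure_ne_top μ _)).symm
      rw [hadd, hunion]
      exact ENNReal.toReal_le_of_le_ofReal (sE_nonneg t) hle
    have h2 : ∫ t in Set.Ioi (0:ℝ), (q t + m t) ≤ ∫ t in Set.Ioi (0:ℝ), sE t :=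
      setIntegral_mono_on ((hqint 0 le_rfl).add hmint) (integrableOn_sE 0)
        measurableSet_Ioi (fun t ht => hsum t ht)
    have h3 : ∫ t in Set.Ioi (0:ℝ), (q t + m t)
        = (∫ t in Set.Ioi (0:ℝ), q t) + ∫ t in Set.Ioi (0:ℝ), m t :=
      integral_add (hqint 0 le_rfl) hmint
    have h4 : (∫ t in Set.Ioi (0:ℝ), sE t) = AE := rfl
    rw [h3, h4, ← hqm_eq] at h2
    linarith
  -- main estimate
  rw [layer' u]
  rcases le_or_gt aE u with hau | hau
  · calc ∫ t in Set.Ioi u, q t ≤ ∫ t in Set.Ioi u, sE t :=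
        setIntegral_mono_on (hqint u hu) (integrableOn_sE u)
          measurableSet_Ioi (fun t ht => hqs t (hu.trans ht.le))
      _ = 2 * Real.exp (-u) := integral_sE_Ioi_of_ge ((log2_le_aE hHaE).trans hau)
      _ ≤ _ := exp_tail_bound haE hHaE hpE hwE hcE hau
  · have hB := B_eq haE hHaE hpE
    have hp := pE_pos hpE
    have hsplit1 : ∫ t in Set.Ioi (0:ℝ), q t
        = (∫ t in Set.Ioc (0:ℝ) u, q t) + ∫ t in Set.Ioi u, q t := by
      rw [← Set.Ioc_union_Ioi_eq_Ioi hu]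
      exact setIntegral_union (Set.Ioc_disjoint_Ioi le_rfl) measurableSet_Ioi
        ((hqint 0 le_rfl).mono_set (by rw [← Set.Ioc_union_Ioi_eq_Ioi hu]; exact Set.subset_union_left))
        (hqint u hu)
    have hconst1 : ∫ _t in Set.Ioc (0:ℝ) u, q u = u * q u := by
      rw [setIntegral_const, Measure.real, Real.volume_Ioc, smul_eq_mul,
        ENNReal.toReal_ofReal (by linarith : (0:ℝ) ≤ u - 0)]
      ring
    have h2 : u * q u ≤ ∫ t in Set.Ioc (0:ℝ) u, q t := by
      rw [← hconst1]
      refine setIntegral_mono_on (integrableOn_const measure_Ioc_lt_top.ne)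
        ((hqint 0 le_rfl).mono_set (by rw [← Set.Ioc_union_Ioi_eq_Ioi hu]; exact Set.subset_union_left))
        measurableSet_Ioc (fun t ht => hq_anti ht.2)
    have h3 : ∫ t in Set.Ioi u, q t
        = (∫ t in Set.Ioc u aE, q t) + ∫ t in Set.Ioi aE, q t := by
      rw [← Set.Ioc_union_Ioi_eq_Ioi hau.le]
      exact setIntegral_union (Set.Ioc_disjoint_Ioi le_rfl) measurableSet_Ioi
        ((hqint u hu).mono_set (by rw [← Set.Ioc_union_Ioi_eq_Ioi hau.le]; exact Set.subset_union_left))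
        (hqint aE (hu.trans hau.le))
    have hconst2 : ∫ _t in Set.Ioc u aE, q u = (aE - u) * q u := by
      rw [setIntegral_const, Measure.real, Real.volume_Ioc, smul_eq_mul,
        ENNReal.toReal_ofReal (by linarith : (0:ℝ) ≤ aE - u)]
    have h4 : ∫ t in Set.Ioc u aE, q t ≤ (aE - u) * q u := by
      rw [← hconst2]
      refine setIntegral_mono_on
        ((hqint u hu).mono_set (by rw [← Set.Ioc_union_Ioi_eq_Ioi hau.le]; exact Set.subset_union_left))
        (integrableOn_const measure_Ioc_lt_top.ne)
        measurableSet_Ioc (fun t ht => hq_anti ht.1.le)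
    have h5 : ∫ t in Set.Ioi aE, q t ≤ pE := by
      calc ∫ t in Set.Ioi aE, q t ≤ ∫ t in Set.Ioi aE, sE t :=
          setIntegral_mono_on (hqint aE (hu.trans hau.le)) (integrableOn_sE aE)
            measurableSet_Ioi (fun t ht => hqs t ((hu.trans hau.le).trans ht.le))
        _ = 2 * Real.exp (-aE) := integral_sE_Ioi_of_ge (log2_le_aE hHaE)
        _ = pE := hpE.symm
    have hkey : ∫ t in Set.Ioi u, q t ≤ AE / 2 - pE * u := by
      rcases le_or_gt (q u) pE with hc1 | hc1
      · nlinarith [hq0 u, sub_nonneg.2 hau.le]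
      · nlinarith [hq0 u]
    exact hkey.trans (tangent_bound haE hHaE hpE hwE hcE u)

lemma rho_cont : Continuous fun x : ℝ => (1/2 : ℝ) * Real.exp (-|x|) :=
  continuous_const.mul (Real.continuous_exp.comp (continuous_abs.neg))

lemma rho_nonneg (x : ℝ) : 0 ≤ (1/2 : ℝ) * Real.exp (-|x|) := by positivity

lemma laplace_transfer (g : ℝ → ℝ) :
    ∫ x, g x ∂laplaceMeasure = ∫ x, ((1/2 : ℝ) * Real.exp (-|x|)) * g x := by
  rw [show laplaceMeasure = (volume : Measure ℝ).withDensity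
      (fun x => ((Real.toNNReal ((1/2) * Real.exp (-|x|)) : NNReal) : ENNReal)) from rfl]
  rw [integral_withDensity_eq_integral_smul (rho_cont.measurable.real_toNNReal) g]
  congr 1
  ext x
  rw [NNReal.smul_def, Real.coe_toNNReal _ (rho_nonneg x), smul_eq_mul]

lemma laplace_integrable_iff (g : ℝ → ℝ) :
    Integrable g laplaceMeasure ↔
      Integrable (fun x => ((1/2 : ℝ) * Real.exp (-|x|)) * g x) volume := by
  rw [show laplaceMeasure = (volume : Measure ℝ).withDensity
      (fun x => ((Real.toNNReal ((1/2) * Real.exp (-|x|)) : NNReal) : ENNReal)) from rfl]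
  rw [integrable_withDensity_iff_integrable_smul (rho_cont.measurable.real_toNNReal)]
  constructor <;> intro h <;> refine h.congr (Eventually.of_forall fun x => ?_) <;>
    simp only [NNReal.smul_def, Real.coe_toNNReal _ (rho_nonneg x), smul_eq_mul]

lemma even_integrable {h : ℝ → ℝ} (hsm : AEStronglyMeasurable h volume)
    (hev : ∀ x, h (-x) = h x) (hint : IntegrableOn h (Set.Ioi 0)) : Integrable h := by
  have hIic : IntegrableOn h (Set.Iic 0) := by
    rw [← Measure.map_neg_eq_self (volume : Measure ℝ)]
    have m : MeasurableEmbedding (fun x : ℝ => -x) := (Homeomorph.neg ℝ).measurableEmbedding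
    rw [m.integrableOn_map_iff]
    simp_rw [Function.comp_def, hev, Set.neg_preimage, Set.neg_Iic, neg_zero]
    exact (integrableOn_Ici_iff_integrableOn_Ioi).mpr hint
  rw [← integrableOn_univ, ← Set.Iic_union_Ioi (a := (0:ℝ))]
  exact hIic.union hint

lemma exp_hinge_integral (c u : ℝ) (hc : 0 < c) (hu : 0 ≤ u) :
    IntegrableOn (fun x => 1/2 * Real.exp (-x) * (c * x - u)) (Set.Ioi (u/c)) ∧
      ∫ x in Set.Ioi (u/c), 1/2 * Real.exp (-x) * (c * x - u)
        = c/2 * Real.exp (-(u/c)) := by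
  set s := u / c with hs
  set F : ℝ → ℝ := fun x => -(1/2) * Real.exp (-x) * (c * x - u + c) with hF
  have hderiv : ∀ x, HasDerivAt F (1/2 * Real.exp (-x) * (c * x - u)) x := by
    intro x
    have h1 : HasDerivAt (fun y : ℝ => Real.exp (-y)) (-Real.exp (-x)) x := by
      simpa [Function.comp_def] using (Real.hasDerivAt_exp (-x)).comp x (hasDerivAt_neg x)
    have h2 : HasDerivAt (fun y : ℝ => c * y - u + c) c x := by
      simpa using (((hasDerivAt_id x).const_mul c).sub_const u).add_const c
    have h3 := (h1.mul h2).const_mul (-(1/2) : ℝ)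
    have hfe : (fun y => -(1/2 : ℝ) * (Real.exp (-y) * (c * y - u + c))) = F := by
      funext y
      simp only [hF]
      ring
    simp only [Pi.mul_apply] at h3
    rw [hfe] at h3
    exact h3.congr_deriv (by ring)
  have hlim : Tendsto F atTop (nhds 0) := by
    have t1 : Tendsto (fun x : ℝ => x * Real.exp (-x)) atTop (nhds 0) := by
      have := Real.tendsto_pow_mul_exp_neg_atTop_nhds_zero 1
      simpa using this
    have t2 : Tendsto (fun x : ℝ => Real.exp (-x)) atTop (nhds 0) :=
      Real.tendsto_exp_neg_atTop_nhds_zero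
    have := (t1.const_mul (-(1/2) * c)).add (t2.const_mul (-(1/2) * (c - u)))
    simp only [mul_zero, add_zero] at this
    refine this.congr (fun x => ?_)
    simp only [hF]
    ring
  have hpos : ∀ x ∈ Set.Ioi s, 0 ≤ 1/2 * Real.exp (-x) * (c * x - u) := by
    intro x hx
    have hx' : u / c < x := hx
    have hux : u < c * x := by
      rw [mul_comm]
      exact (div_lt_iff₀ hc).1 hx'
    exact mul_nonneg (by positivity) (by linarith)
  have hcont : ContinuousWithinAt F (Set.Ici s) s :=
    (hderiv s).continuousAt.continuousWithinAt
  have hderiv' : ∀ x ∈ Set.Ioi s, HasDerivAt F (1/2 * Real.exp (-x) * (c * x - u)) x :=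
    fun x _ => hderiv x
  refine ⟨integrableOn_Ioi_deriv_of_nonneg hcont hderiv' hpos hlim, ?_⟩
  rw [integral_Ioi_of_hasDerivAt_of_nonneg hcont hderiv' hpos hlim]
  have hcs : c * s = u := by
    rw [hs]
    field_simp
  simp only [hF, zero_sub, hcs]
  ring

lemma rho_integrableOn_Ioi :
    IntegrableOn (fun x : ℝ => (1/2 : ℝ) * Real.exp (-|x|)) (Set.Ioi 0) := by
  have h : IntegrableOn (fun x : ℝ => (1/2 : ℝ) * Real.exp (-x)) (Set.Ioi 0) := by
    have := (exp_neg_integrableOn_Ioi (0:ℝ) (b := 1) one_pos).const_mul (1/2 : ℝ)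
    simpa [IntegrableOn] using this
  refine h.congr_fun (fun x hx => ?_) measurableSet_Ioi
  rw [abs_of_pos hx]

lemma rho_integrable : Integrable (fun x : ℝ => (1/2 : ℝ) * Real.exp (-|x|)) :=
  even_integrable rho_cont.aestronglyMeasurable (fun x => by rw [abs_neg]) rho_integrableOn_Ioi

instance laplace_prob : IsProbabilityMeasure laplaceMeasure := by
  constructor
  rw [show laplaceMeasure = (volume : Measure ℝ).withDensity
      (fun x => ENNReal.ofReal ((1/2) * Real.exp (-|x|))) from rfl]
  rw [withDensity_apply _ MeasurableSet.univ, Measure.restrict_univ]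
  rw [← ofReal_integral_eq_lintegral_ofReal rho_integrable
    (Eventually.of_forall rho_nonneg)]
  have h1 : ∫ x : ℝ, (1/2 : ℝ) * Real.exp (-|x|)
      = 2 * ∫ x in Set.Ioi (0:ℝ), (1/2 : ℝ) * Real.exp (-x) :=
    integral_comp_abs (f := fun y => (1/2 : ℝ) * Real.exp (-y))
  rw [h1, integral_const_mul, integral_exp_neg_Ioi_zero]
  norm_num

lemma rho_mul_id_integrableOn_Ioi :
    IntegrableOn (fun x : ℝ => ((1/2 : ℝ) * Real.exp (-|x|)) * |x|) (Set.Ioi 0) := by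
  have h := (exp_hinge_integral 1 0 one_pos le_rfl).1
  simp only [one_mul, sub_zero, zero_div] at h
  refine h.congr_fun (fun x hx => ?_) measurableSet_Ioi
  rw [abs_of_pos hx]

lemma rho_mul_abs_integrable :
    Integrable (fun x : ℝ => ((1/2 : ℝ) * Real.exp (-|x|)) * |x|) :=
  even_integrable (rho_cont.mul continuous_abs).aestronglyMeasurable
    (fun x => by rw [abs_neg]) rho_mul_id_integrableOn_Ioi

lemma laplace_int_id : Integrable (fun x : ℝ => x) laplaceMeasure := by
  rw [laplace_integrable_iff]
  refine rho_mul_abs_integrable.mono' (rho_cont.mul continuous_id).aestronglyMeasurable ?_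
  filter_upwards with x
  rw [Real.norm_eq_abs, abs_mul, abs_of_nonneg (rho_nonneg x)]

lemma laplace_mean_zero : ∫ x, x ∂laplaceMeasure = 0 := by
  rw [laplace_transfer]
  set h : ℝ → ℝ := fun x => ((1/2 : ℝ) * Real.exp (-|x|)) * x with hh
  have hIoi : IntegrableOn h (Set.Ioi 0) := by
    refine rho_mul_id_integrableOn_Ioi.congr_fun (fun x hx => ?_) measurableSet_Ioi
    simp only [hh]
    rw [abs_of_pos hx]
  have hIic : IntegrableOn h (Set.Iic 0) := by
    rw [← Measure.map_neg_eq_self (volume : Measure ℝ)]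
    have m : MeasurableEmbedding (fun x : ℝ => -x) := (Homeomorph.neg ℝ).measurableEmbedding
    rw [m.integrableOn_map_iff]
    have : (h ∘ fun x : ℝ => -x) = fun x => -h x := by
      funext x
      simp only [Function.comp_apply, hh, abs_neg]
      ring
    rw [this]
    simp only [Set.neg_preimage, Set.neg_Iic, neg_zero]
    exact ((integrableOn_Ici_iff_integrableOn_Ioi).mpr hIoi).neg
  have hsplit : ∫ x, h x = (∫ x in Set.Iic (0:ℝ), h x) + ∫ x in Set.Ioi (0:ℝ), h x := by
    rw [← setIntegral_union (Set.Iic_disjoint_Ioi le_rfl) measurableSet_Ioi hIic hIoi,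
      Set.Iic_union_Ioi, setIntegral_univ]
  have hneg : ∫ x in Set.Iic (0:ℝ), h x = -∫ x in Set.Ioi (0:ℝ), h x := by
    have e1 : ∫ x in Set.Iic (0:ℝ), h (-x) = ∫ x in Set.Ioi (-(0:ℝ)), h x :=
      integral_comp_neg_Iic 0 h
    have e2 : ∀ x, h (-x) = -h x := by
      intro x
      simp only [hh, abs_neg]
      ring
    simp only [e2, neg_zero] at e1
    rw [integral_neg] at e1
    linarith
  rw [hsplit, hneg]
  ring

lemma laplace_comp_neg (g : ℝ → ℝ) :
    ∫ x, g (-x) ∂laplaceMeasure = ∫ x, g x ∂laplaceMeasure := by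
  rw [laplace_transfer, laplace_transfer]
  have m : MeasurableEmbedding (fun x : ℝ => -x) := (Homeomorph.neg ℝ).measurableEmbedding
  have h := m.integral_map (μ := (volume : Measure ℝ))
    (g := fun x => ((1/2 : ℝ) * Real.exp (-|x|)) * g x)
  rw [Measure.map_neg_eq_self (volume : Measure ℝ)] at h
  calc ∫ x : ℝ, ((1/2 : ℝ) * Real.exp (-|x|)) * g (-x)
      = ∫ x : ℝ, ((1/2 : ℝ) * Real.exp (-|(-x)|)) * g (-x) := by
        congr 1
        funext x
        rw [abs_neg]
    _ = ∫ x : ℝ, ((1/2 : ℝ) * Real.exp (-|x|)) * g x := h.symm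

lemma laplace_hinge_int (c u : ℝ) :
    Integrable (fun x => max (c * x - u) 0) laplaceMeasure := by
  have cont : Continuous fun x : ℝ => max (c * x - u) 0 :=
    ((continuous_const.mul continuous_id).sub continuous_const).max continuous_const
  refine Integrable.mono' (((laplace_int_id.abs).const_mul |c|).add (integrable_const |u|))
    cont.aestronglyMeasurable ?_
  filter_upwards with x
  rw [Real.norm_eq_abs, abs_of_nonneg (le_max_right _ _)]
  have h1 : max (c * x - u) 0 ≤ |c * x - u| := max_le (le_abs_self _) (abs_nonneg _)
  have h2 : |c * x - u| ≤ |c| * |x| + |u| := by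
    rw [sub_eq_add_neg]
    refine (abs_add_le _ _).trans ?_
    rw [abs_neg, abs_mul]
  exact h1.trans h2

lemma laplace_hinge_val {c u : ℝ} (hc : 0 < c) (hu : 0 ≤ u) :
    ∫ x, max (c * x - u) 0 ∂laplaceMeasure = c/2 * Real.exp (-(u/c)) := by
  rw [laplace_transfer]
  have hzero : ∀ x ∉ Set.Ioi (u/c), ((1/2 : ℝ) * Real.exp (-|x|)) * max (c * x - u) 0 = 0 := by
    intro x hx
    rw [Set.mem_Ioi, not_lt] at hx
    have : c * x ≤ u := by
      rw [← le_div_iff₀' hc]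
      exact hx
    rw [max_eq_right (by linarith), mul_zero]
  rw [← setIntegral_eq_integral_of_forall_compl_eq_zero hzero]
  have hcongr : ∀ x ∈ Set.Ioi (u/c),
      ((1/2 : ℝ) * Real.exp (-|x|)) * max (c * x - u) 0
        = 1/2 * Real.exp (-x) * (c * x - u) := by
    intro x hx
    rw [Set.mem_Ioi] at hx
    have hx0 : 0 < x := lt_of_le_of_lt (by positivity) hx
    have hcx : u ≤ c * x := by
      rw [← div_le_iff₀' hc]
      exact hx.le
    rw [abs_of_pos hx0, max_eq_left (by linarith)]
  rw [setIntegral_congr_fun measurableSet_Ioi hcongr]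
  exact (exp_hinge_integral c u hc hu).2

section subgrad
variable {f : ℝ → ℝ}

noncomputable def subg (f : ℝ → ℝ) (u : ℝ) : ℝ :=
  sInf ((fun y => (f y - f u) / (y - u)) '' Set.Ioi u)

lemma slope_mono_aux (hf : ConvexOn ℝ Set.univ f) {x u y : ℝ} (hxu : x < u) (huy : u < y) :
    (f u - f x) / (u - x) ≤ (f y - f u) / (y - u) :=
  hf.slope_mono_adjacent (Set.mem_univ x) (Set.mem_univ y) hxu huy

lemma subg_bddBelow (hf : ConvexOn ℝ Set.univ f) (u : ℝ) :
    BddBelow ((fun y => (f y - f u) / (y - u)) '' Set.Ioi u) := by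
  refine ⟨(f u - f (u-1)) / (u - (u-1)), ?_⟩
  rintro z ⟨y, hy, rfl⟩
  exact slope_mono_aux hf (by linarith) hy

lemma subg_le_slope (hf : ConvexOn ℝ Set.univ f) {u y : ℝ} (h : u < y) :
    subg f u ≤ (f y - f u) / (y - u) :=
  csInf_le (subg_bddBelow hf u) ⟨y, h, rfl⟩

lemma slope_le_subg (hf : ConvexOn ℝ Set.univ f) {x u : ℝ} (h : x < u) :
    (f u - f x) / (u - x) ≤ subg f u := by
  refine le_csInf ⟨_, ⟨u+1, by simp, rfl⟩⟩ ?_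
  rintro z ⟨y, hy, rfl⟩
  exact slope_mono_aux hf h hy

lemma subg_tangent (hf : ConvexOn ℝ Set.univ f) (u x : ℝ) :
    f u + subg f u * (x - u) ≤ f x := by
  rcases lt_trichotomy x u with h | h | h
  · have h1 := slope_le_subg hf h
    rw [div_le_iff₀ (by linarith : (0:ℝ) < u - x)] at h1
    have h2 : subg f u * (x - u) = -(subg f u * (u - x)) := by ring
    nlinarith [h1]
  · rw [h]; simp
  · have h1 := subg_le_slope hf h
    rw [le_div_iff₀ (by linarith : (0:ℝ) < x - u)] at h1
    linarith

lemma subg_mono (hf : ConvexOn ℝ Set.univ f) : Monotone (subg f) := by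
  intro u v huv
  rcases eq_or_lt_of_le huv with rfl | h
  · exact le_rfl
  · refine le_trans (subg_le_slope hf h) ?_
    refine le_csInf ⟨_, ⟨v+1, by simp, rfl⟩⟩ ?_
    rintro z ⟨y, hy, rfl⟩
    exact slope_mono_aux hf h hy
end subgrad

section grid
variable {f D : ℝ → ℝ} {δ : ℝ}

noncomputable def gridS (f D : ℝ → ℝ) (δ : ℝ) (N : ℕ) (x : ℝ) : ℝ :=
  f 0 + D 0 * x + ∑ i ∈ Finset.range N, (D (((i:ℝ)+1)*δ) - D ((i:ℝ)*δ)) * max (x - ((i:ℝ)+1)*δ) 0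

lemma gridS_succ (N : ℕ) (x : ℝ) :
    gridS f D δ (N+1) x = gridS f D δ N x
      + (D (((N:ℝ)+1)*δ) - D ((N:ℝ)*δ)) * max (x - ((N:ℝ)+1)*δ) 0 := by
  rw [gridS, gridS, Finset.sum_range_succ]
  ring

lemma gridS_cont (N : ℕ) : Continuous (gridS f D δ N) := by
  apply Continuous.add
  · exact continuous_const.add (continuous_const.mul continuous_id)
  · refine continuous_finset_sum _ (fun i _ => ?_)
    exact continuous_const.mul ((continuous_id.sub continuous_const).max continuous_const)

lemma gridS_ge_affine (hD : Monotone D) (hδ : 0 < δ) (N : ℕ) (x : ℝ) :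
    f 0 + D 0 * x ≤ gridS f D δ N x := by
  rw [gridS]
  have h : 0 ≤ ∑ i ∈ Finset.range N,
      (D (((i:ℝ)+1)*δ) - D ((i:ℝ)*δ)) * max (x - ((i:ℝ)+1)*δ) 0 := by
    refine Finset.sum_nonneg (fun i _ => ?_)
    refine mul_nonneg (sub_nonneg.2 (hD ?_)) (le_max_right _ _)
    nlinarith [hδ]
  linarith

lemma gridS_le (hT : ∀ u x, f u + D u * (x - u) ≤ f x) (hδ : 0 < δ) :
    ∀ N : ℕ, ∀ x : ℝ, gridS f D δ N x ≤ f x ∧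
      ((N:ℝ)*δ ≤ x → gridS f D δ N x ≤ f ((N:ℝ)*δ) + D ((N:ℝ)*δ) * (x - (N:ℝ)*δ)) := by
  intro N
  induction N with
  | zero =>
    intro x
    constructor
    · have := hT 0 x
      rw [gridS]
      simp only [Nat.cast_zero, Finset.range_zero, Finset.sum_empty, add_zero]
      linarith [this]
    · intro _
      rw [gridS]
      simp only [Nat.cast_zero, Finset.range_zero, Finset.sum_empty, add_zero, zero_mul]
      have : f 0 + D 0 * (x - 0) ≤ f 0 + D 0 * (x - 0) := le_rfl
      linarith [this]
  | succ N IH =>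
    intro x
    set a := (N:ℝ)*δ with ha
    set b := ((N:ℝ)+1)*δ with hb
    have hab : a < b := by nlinarith
    have hNb : ((N+1 : ℕ):ℝ)*δ = b := by push_cast; ring
    have hIH1 := (IH x).1
    rcases le_or_gt x b with hx | hx
    · have hmax : max (x - ((N:ℝ)+1)*δ) 0 = 0 := max_eq_right (by rw [← hb] at *; linarith)
      constructor
      · rw [gridS_succ, hmax, mul_zero, add_zero]
        exact hIH1
      · intro hbx
        rw [hNb] at hbx
        have hxe : x = b := le_antisymm hx hbx
        have h1 := (IH x).2 (by linarith)
        have h2 := hT a x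
        rw [gridS_succ, hmax, mul_zero, add_zero, hNb, hxe]
        have h3 : f a + D a * (b - a) ≤ f b := by
          have := hT a b; linarith
        rw [hxe] at h1 h2
        have e : x - x = 0 := by ring
        calc gridS f D δ N b ≤ f a + D a * (b - a) := h1
          _ ≤ f b := h3
          _ = f b + D b * (b - b) := by ring
    · have hmax : max (x - ((N:ℝ)+1)*δ) 0 = x - b := max_eq_left (by rw [← hb] at *; linarith)
      have h1 := (IH x).2 (by nlinarith)
      have h3 : f a + D a * (b - a) ≤ f b := hT a b
      have key : gridS f D δ (N+1) x ≤ f b + D b * (x - b) := by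
        rw [gridS_succ, hmax]
        have e : gridS f D δ N x + (D b - D a) * (x - b)
            ≤ (f a + D a * (x - a)) + (D b - D a) * (x - b) := by linarith
        have e2 : (f a + D a * (x - a)) + (D b - D a) * (x - b)
            = (f a + D a * (b - a)) + D b * (x - b) := by ring
        calc gridS f D δ N x + (D b - D a) * (x - b)
            ≤ (f a + D a * (b - a)) + D b * (x - b) := by rw [← e2]; exact e
          _ ≤ f b + D b * (x - b) := by linarith
      constructor
      · refine key.trans ?_
        have := hT b x
        linarith
      · intro _
        rw [hNb]
        exact key

lemma gridS_lin (hδ : 0 < δ) (N : ℕ) : ∀ x : ℝ, (N:ℝ)*δ ≤ x →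
    gridS f D δ N x = gridS f D δ N ((N:ℝ)*δ) + D ((N:ℝ)*δ) * (x - (N:ℝ)*δ) := by
  induction N with
  | zero =>
    intro x _
    rw [gridS, gridS]
    simp only [Nat.cast_zero, Finset.range_zero, Finset.sum_empty, add_zero, zero_mul]
    ring
  | succ N IH =>
    intro x hx
    set a := (N:ℝ)*δ with ha
    set b := ((N:ℝ)+1)*δ with hb
    have hNb : ((N+1 : ℕ):ℝ)*δ = b := by push_cast; ring
    rw [hNb] at hx
    have hab : a ≤ b := by nlinarith
    have e1 : gridS f D δ (N+1) x
        = (gridS f D δ N a + D a * (x - a)) + (D b - D a) * (x - b) := by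
      rw [gridS_succ, IH x (by linarith), max_eq_left (by linarith)]
    have e2 : gridS f D δ (N+1) b = gridS f D δ N a + D a * (b - a) := by
      rw [gridS_succ, IH b hab]
      have : max (b - ((N:ℝ)+1)*δ) 0 = 0 := by
        rw [← hb, sub_self]
        exact max_self 0
      rw [this, mul_zero, add_zero]
    rw [hNb, e1, e2]
    ring

lemma gridS_lower (hT : ∀ u x, f u + D u * (x - u) ≤ f x) (hD : Monotone D) (hδ : 0 < δ) :
    ∀ N : ℕ, f ((N:ℝ)*δ) - (D ((N:ℝ)*δ) - D 0) * δ ≤ gridS f D δ N ((N:ℝ)*δ) := by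
  intro N
  induction N with
  | zero =>
    rw [gridS]
    simp only [Nat.cast_zero, Finset.range_zero, Finset.sum_empty, add_zero, zero_mul, mul_zero]
    linarith
  | succ N IH =>
    set a := (N:ℝ)*δ with ha
    set b := ((N:ℝ)+1)*δ with hb
    have hNb : ((N+1 : ℕ):ℝ)*δ = b := by push_cast; ring
    have hab : a ≤ b := by nlinarith
    have e2 : gridS f D δ (N+1) b = gridS f D δ N a + D a * (b - a) := by
      rw [gridS_succ, gridS_lin hδ N b (by linarith)]
      have : max (b - ((N:ℝ)+1)*δ) 0 = 0 := by
        rw [← hb, sub_self]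
        exact max_self 0
      rw [this, mul_zero, add_zero]
    have h3 : f b + D b * (a - b) ≤ f a := hT b a
    have hba : b - a = δ := by rw [ha, hb]; ring
    have hab' : a - b = -δ := by rw [ha, hb]; ring
    rw [hNb, e2]
    rw [hba] at *
    rw [hab'] at h3
    have hD0a : D 0 ≤ D a := hD (by positivity)
    have hDab : D a ≤ D b := hD hab
    nlinarith [IH]

lemma gridS_mono_N (hD : Monotone D) (hδ : 0 < δ) {k N : ℕ} (hkN : k ≤ N) (x : ℝ) :
    gridS f D δ k x ≤ gridS f D δ N x := by
  rw [gridS, gridS]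
  have := Finset.sum_le_sum_of_subset_of_nonneg
    (f := fun i : ℕ => (D (((i:ℝ)+1)*δ) - D ((i:ℝ)*δ)) * max (x - ((i:ℝ)+1)*δ) 0)
    (Finset.range_subset_range.2 hkN)
    (fun i _ _ => mul_nonneg (sub_nonneg.2 (hD (by nlinarith))) (le_max_right _ _))
  linarith

lemma gridS_zero_of_nonpos (hδ : 0 < δ) (N : ℕ) {x : ℝ} (hx : x ≤ 0) :
    gridS f D δ N x = f 0 + D 0 * x := by
  rw [gridS]
  have h : ∀ i ∈ Finset.range N,
      (D (((i:ℝ)+1)*δ) - D ((i:ℝ)*δ)) * max (x - ((i:ℝ)+1)*δ) 0 = 0 := by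
    intro i _
    have h1 : (0:ℝ) < ((i:ℝ)+1)*δ := by positivity
    rw [max_eq_right (by linarith), mul_zero]
  rw [Finset.sum_eq_zero h, add_zero]

lemma gridS_conv (hT : ∀ u x, f u + D u * (x - u) ≤ f x) (hD : Monotone D) (hδ : 0 < δ)
    {x : ℝ} (hx0 : 0 ≤ x) {N : ℕ} (hxN : x ≤ (N:ℝ)*δ) :
    f x - gridS f D δ N x ≤ 2 * (D x - D 0) * δ := by
  set k := ⌊x / δ⌋₊ with hk
  have hk1 : (k:ℝ)*δ ≤ x := by
    have h := Nat.floor_le (div_nonneg hx0 hδ.le)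
    calc (k:ℝ)*δ ≤ (x/δ)*δ := by nlinarith
      _ = x := by field_simp
  have hk2 : x < ((k:ℝ)+1)*δ := by
    have h := Nat.lt_floor_add_one (x/δ)
    calc x = (x/δ)*δ := by field_simp
      _ < ((k:ℝ)+1)*δ := by nlinarith
  have hkN : k ≤ N := by
    have h1 : x/δ ≤ (N:ℝ) := by
      rw [div_le_iff₀ hδ]
      linarith
    have h2 := Nat.floor_le_floor h1
    rwa [Nat.floor_natCast] at h2
  set a := (k:ℝ)*δ with ha
  have h1 : gridS f D δ k x ≤ gridS f D δ N x := gridS_mono_N hD hδ hkN x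
  have h2 : gridS f D δ k x = gridS f D δ k a + D a * (x - a) := gridS_lin hδ k x hk1
  have h3 : f a - (D a - D 0) * δ ≤ gridS f D δ k a := gridS_lower hT hD hδ k
  have h4 : f x + D x * (a - x) ≤ f a := hT x a
  have hDa0 : D 0 ≤ D a := hD (by positivity)
  have hDax : D a ≤ D x := hD hk1
  have hxa1 : x - a ≤ δ := by rw [ha]; linarith
  have hxa0 : 0 ≤ x - a := by linarith
  nlinarith [mul_le_mul_of_nonneg_left hxa1 (sub_nonneg.2 hDax),
    mul_le_mul_of_nonneg_right (sub_nonneg.2 hDax) hδ.le,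
    mul_le_mul_of_nonneg_right (sub_nonneg.2 hDa0) hδ.le]

end grid

section assembly
variable {aE pE wE cE : ℝ}

lemma gridS_integral {Ω : Type*} [MeasurableSpace Ω] (μ : Measure Ω) [IsProbabilityMeasure μ]
    {Z : Ω → ℝ} (hZ : Integrable Z μ) (f D : ℝ → ℝ) (δ : ℝ) (N : ℕ) :
    Integrable (fun ω => gridS f D δ N (Z ω)) μ ∧
      ∫ ω, gridS f D δ N (Z ω) ∂μ
        = f 0 + D 0 * (∫ ω, Z ω ∂μ)
          + ∑ i ∈ Finset.range N, (D (((i:ℝ)+1)*δ) - D ((i:ℝ)*δ))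
              * ∫ ω, max (Z ω - ((i:ℝ)+1)*δ) 0 ∂μ := by
  have hterm : ∀ i : ℕ, Integrable
      (fun ω => (D (((i:ℝ)+1)*δ) - D ((i:ℝ)*δ)) * max (Z ω - ((i:ℝ)+1)*δ) 0) μ :=
    fun i => (hinge_integrable hZ _).const_mul _
  have hsum : Integrable (fun ω => ∑ i ∈ Finset.range N,
      (D (((i:ℝ)+1)*δ) - D ((i:ℝ)*δ)) * max (Z ω - ((i:ℝ)+1)*δ) 0) μ :=
    integrable_finset_sum _ (fun i _ => hterm i)
  have haff : Integrable (fun ω => f 0 + D 0 * Z ω) μ :=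
    (integrable_const _).add (hZ.const_mul _)
  constructor
  · exact haff.add hsum
  · have e : (fun ω => gridS f D δ N (Z ω))
        = fun ω => (f 0 + D 0 * Z ω) + ∑ i ∈ Finset.range N,
            (D (((i:ℝ)+1)*δ) - D ((i:ℝ)*δ)) * max (Z ω - ((i:ℝ)+1)*δ) 0 := rfl
    rw [e, integral_add haff hsum,
      integral_add (integrable_const _) (hZ.const_mul _),
      integral_finset_sum _ (fun i _ => hterm i)]
    congr 2
    · simp
    · exact integral_const_mul _ _
    · funext i
      exact integral_const_mul _ _

set_option maxHeartbeats 2000000 in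
/-- Sharp one-dimensional convex sub-exponential comparison: if `X` is integrable with
`E[X] = 0` and `P(|X| > t) ≤ min{1, 2e^{-t}}` for all `t ≥ 0`, and `L` is standard Laplace,
then `X ⪯_cx c_E L`, where `c_E = B_E/(p_E(1 + w_E))` with `H_E(a_E) = B_E = A_E/2`,
`p_E = 2e^{-a_E}` and `w_E = log(1/(2p_E))`. -/
theorem stmt13
    (aE pE wE cE : ℝ)
    (haE : 0 < aE) (hHaE : HE aE = AE / 2)
    (hpE : pE = 2 * Real.exp (-aE))
    (hwE : wE = Real.log (1 / (2 * pE)))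
    (hcE : cE = (AE / 2) / (pE * (1 + wE)))
    {Ω : Type*} [MeasurableSpace Ω] (μ : Measure Ω) [IsProbabilityMeasure μ]
    (X : Ω → ℝ) (hXint : Integrable X μ) (hmean : ∫ ω, X ω ∂μ = 0)
    (htail : ∀ t : ℝ, 0 ≤ t → μ {ω | t < |X ω|} ≤ ENNReal.ofReal (sE t)) :
    ∀ f : ℝ → ℝ, ConvexOn ℝ Set.univ f →
      Integrable (fun ω => f (X ω)) μ →
      Integrable (fun x => f (cE * x)) laplaceMeasure →
      ∫ ω, f (X ω) ∂μ ≤ ∫ x, f (cE * x) ∂laplaceMeasure := by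
  intro f hconv hfX hfL
  have hc : 0 < cE := cE_pos haE hHaE hpE hwE hcE
  -- replace X by a measurable representative X'
  obtain ⟨X', hX'm, hae⟩ : ∃ X' : Ω → ℝ, Measurable X' ∧ X =ᵐ[μ] X' :=
    ⟨hXint.aestronglyMeasurable.mk X,
      hXint.aestronglyMeasurable.stronglyMeasurable_mk.measurable,
      hXint.aestronglyMeasurable.ae_eq_mk⟩
  have hX'int : Integrable X' μ := hXint.congr hae
  have hX'mean : ∫ ω, X' ω ∂μ = 0 := by rw [← integral_congr_ae hae]; exact hmean
  have hX'tail : ∀ t : ℝ, 0 ≤ t → μ {ω | t < |X' ω|} ≤ ENNReal.ofReal (sE t) := by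
    intro t ht
    have hsets : {ω | t < |X' ω|} =ᵐ[μ] {ω | t < |X ω|} := by
      filter_upwards [hae] with ω h
      have e : (t < |X' ω|) = (t < |X ω|) := by rw [h]
      exact e
    rw [measure_congr hsets]
    exact htail t ht
  have hfX' : Integrable (fun ω => f (X' ω)) μ :=
    hfX.congr (by filter_upwards [hae] with ω h; rw [h])
  have hgoal : ∫ ω, f (X ω) ∂μ = ∫ ω, f (X' ω) ∂μ :=
    integral_congr_ae (by filter_upwards [hae] with ω h; rw [h])
  rw [hgoal]
  -- subgradient data
  set D : ℝ → ℝ := subg f with hD_def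
  have hT : ∀ u x, f u + D u * (x - u) ≤ f x := subg_tangent hconv
  have hDmono : Monotone D := subg_mono hconv
  set f' : ℝ → ℝ := fun y => f (-y) with hf'_def
  set D' : ℝ → ℝ := fun u => -D (-u) with hD'_def
  have hT' : ∀ u x, f' u + D' u * (x - u) ≤ f' x := by
    intro u x
    have h := hT (-u) (-x)
    have e : (-D (-u)) * (x - u) = D (-u) * ((-x) - (-u)) := by ring
    simp only [hf'_def, hD'_def]
    linarith [h, e.le, e.ge]
  have hD'mono : Monotone D' := fun a b hab => neg_le_neg (hDmono (neg_le_neg hab))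
  have hf'0 : f' 0 = f 0 := by simp [hf'_def]
  have hD'0 : D' 0 = -D 0 := by simp [hD'_def]
  -- the approximating sequence
  set δ : ℕ → ℝ := fun n => 1/((n:ℝ)+1) with hδ_def
  have hδpos : ∀ n, 0 < δ n := fun n => by positivity
  set NN : ℕ → ℕ := fun n => (n+1)*(n+1) with hNN_def
  have hNδ : ∀ n, ((NN n : ℝ)) * δ n = (n:ℝ)+1 := by
    intro n
    simp only [hNN_def, hδ_def]
    push_cast
    field_simp
  set G : ℕ → ℝ → ℝ := fun n x => gridS f D (δ n) (NN n) x
    + gridS f' D' (δ n) (NN n) (-x) - (f 0 + D 0 * x) with hG_def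
  have hG_eq_pos : ∀ n x, 0 ≤ x → G n x = gridS f D (δ n) (NN n) x := by
    intro n x hx
    simp only [hG_def]
    rw [gridS_zero_of_nonpos (hδpos n) _ (by linarith : -x ≤ 0), hf'0, hD'0]
    ring
  have hG_eq_neg : ∀ n x, x ≤ 0 → G n x = gridS f' D' (δ n) (NN n) (-x) := by
    intro n x hx
    simp only [hG_def]
    rw [gridS_zero_of_nonpos (hδpos n) _ hx]
    ring
  have hGle : ∀ n x, G n x ≤ f x := by
    intro n x
    rcases le_total 0 x with hx | hx
    · rw [hG_eq_pos n x hx]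
      exact (gridS_le hT (hδpos n) _ x).1
    · rw [hG_eq_neg n x hx]
      have h := (gridS_le hT' (hδpos n) (NN n) (-x)).1
      simpa only [hf'_def, neg_neg] using h
  have hGge : ∀ n x, f 0 + D 0 * x ≤ G n x := by
    intro n x
    have h1 := gridS_ge_affine (f := f) hDmono (hδpos n) (NN n) x
    have h2 := gridS_ge_affine (f := f') hD'mono (hδpos n) (NN n) (-x)
    rw [hf'0, hD'0] at h2
    have e : (-D 0) * (-x) = D 0 * x := by ring
    simp only [hG_def]
    linarith [e.le, e.ge]
  have hGconv : ∀ x, Tendsto (fun n => G n x) atTop (nhds (f x)) := by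
    intro x
    have hCb : ∀ᶠ n in atTop, f x - 2*|D x - D 0| * δ n ≤ G n x := by
      filter_upwards [eventually_ge_atTop ⌈|x|⌉₊] with n hn
      have hxn : |x| ≤ (n:ℝ)+1 := by
        have h1 : |x| ≤ (⌈|x|⌉₊ : ℝ) := Nat.le_ceil _
        have h2 : ((⌈|x|⌉₊ : ℕ) : ℝ) ≤ (n:ℝ) := by exact_mod_cast hn
        linarith
      rcases le_total 0 x with hx | hx
      · rw [hG_eq_pos n x hx]
        have hxb : x ≤ (NN n : ℝ) * δ n := by
          rw [hNδ n, ← abs_of_nonneg hx]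
          exact hxn
        have h := gridS_conv hT hDmono (hδpos n) hx hxb
        have habs : D x - D 0 ≤ |D x - D 0| := le_abs_self _
        nlinarith [hδpos n]
      · rw [hG_eq_neg n x hx]
        have hxb : -x ≤ (NN n : ℝ) * δ n := by
          rw [hNδ n, ← abs_of_nonpos hx]
          exact hxn
        have h := gridS_conv hT' hD'mono (hδpos n) (by linarith : (0:ℝ) ≤ -x) hxb
        have he1 : f' (-x) = f x := by simp [hf'_def]
        have he2 : D' (-x) - D' 0 = D 0 - D x := by simp [hD'_def]; ring
        rw [he1, he2] at h
        have habs : D 0 - D x ≤ |D x - D 0| := by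
          rw [abs_sub_comm]
          exact le_abs_self _
        nlinarith [hδpos n]
    have htend : Tendsto (fun n => f x - 2*|D x - D 0| * δ n) atTop (nhds (f x)) := by
      have h0 : Tendsto (fun n : ℕ => δ n) atTop (nhds 0) := by
        simp only [hδ_def]
        exact tendsto_one_div_add_atTop_nhds_zero_nat
      have h1 := h0.const_mul (2*|D x - D 0|)
      rw [mul_zero] at h1
      have h2 := tendsto_const_nhds (x := f x) (f := atTop (α := ℕ)).sub h1
      simpa using h2
    exact tendsto_of_tendsto_of_tendsto_of_le_of_le' htend tendsto_const_nhds
      hCb (Eventually.of_forall (fun n => hGle n x))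
  -- integrability of the affine minorant composed with X'
  have haffX : Integrable (fun ω => f 0 + D 0 * X' ω) μ :=
    (integrable_const _).add (hX'int.const_mul _)
  have hnegX : Integrable (fun ω => -X' ω) μ := hX'int.neg
  have hnegXmean : ∫ ω, -X' ω ∂μ = 0 := by rw [integral_neg, hX'mean, neg_zero]
  have hnegXtail : ∀ t : ℝ, 0 ≤ t → μ {ω | t < |(-X' ω)|} ≤ ENNReal.ofReal (sE t) := by
    intro t ht
    have e : {ω | t < |(-X' ω)|} = {ω | t < |X' ω|} := by
      ext ω
      simp [abs_neg]
    rw [e]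
    exact hX'tail t ht
  -- Laplace side integrability data
  have hcL : Integrable (fun x => cE * x) laplaceMeasure := laplace_int_id.const_mul _
  have hcLneg : Integrable (fun x => -(cE * x)) laplaceMeasure := hcL.neg
  have hcLmean : ∫ x, cE * x ∂laplaceMeasure = 0 := by
    rw [integral_const_mul, laplace_mean_zero, mul_zero]
  have hcLnegmean : ∫ x, -(cE * x) ∂laplaceMeasure = 0 := by
    rw [integral_neg, hcLmean, neg_zero]
  -- expansion of both sides and termwise comparison
  have hcomp : ∀ n, ∫ ω, G n (X' ω) ∂μ ≤ ∫ x, G n (cE * x) ∂laplaceMeasure := by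
    intro n
    have h1 := gridS_integral μ hX'int f D (δ n) (NN n)
    have h2 := gridS_integral μ hnegX f' D' (δ n) (NN n)
    have h3 := gridS_integral laplaceMeasure hcL f D (δ n) (NN n)
    have h4 := gridS_integral laplaceMeasure hcLneg f' D' (δ n) (NN n)
    have haffL : Integrable (fun x => f 0 + D 0 * (cE * x)) laplaceMeasure :=
      (integrable_const _).add (hcL.const_mul _)
    have haddX : Integrable (fun ω => gridS f D (δ n) (NN n) (X' ω)
        + gridS f' D' (δ n) (NN n) (-X' ω)) μ := h1.1.add h2.1
    have eX : ∫ ω, G n (X' ω) ∂μ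
        = (∫ ω, gridS f D (δ n) (NN n) (X' ω) ∂μ)
          + (∫ ω, gridS f' D' (δ n) (NN n) (-X' ω) ∂μ)
          - ∫ ω, (f 0 + D 0 * X' ω) ∂μ := by
      calc ∫ ω, G n (X' ω) ∂μ
          = ∫ ω, ((gridS f D (δ n) (NN n) (X' ω) + gridS f' D' (δ n) (NN n) (-X' ω))
              - (f 0 + D 0 * X' ω)) ∂μ := by simp only [hG_def]
        _ = (∫ ω, (gridS f D (δ n) (NN n) (X' ω) + gridS f' D' (δ n) (NN n) (-X' ω)) ∂μ)
              - ∫ ω, (f 0 + D 0 * X' ω) ∂μ := integral_sub haddX haffX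
        _ = _ := by rw [integral_add h1.1 h2.1]
    have haddL : Integrable (fun x => gridS f D (δ n) (NN n) (cE * x)
        + gridS f' D' (δ n) (NN n) (-(cE * x))) laplaceMeasure := h3.1.add h4.1
    have eL : ∫ x, G n (cE * x) ∂laplaceMeasure
        = (∫ x, gridS f D (δ n) (NN n) (cE * x) ∂laplaceMeasure)
          + (∫ x, gridS f' D' (δ n) (NN n) (-(cE * x)) ∂laplaceMeasure)
          - ∫ x, (f 0 + D 0 * (cE * x)) ∂laplaceMeasure := by
      calc ∫ x, G n (cE * x) ∂laplaceMeasure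
          = ∫ x, ((gridS f D (δ n) (NN n) (cE * x) + gridS f' D' (δ n) (NN n) (-(cE * x)))
              - (f 0 + D 0 * (cE * x))) ∂laplaceMeasure := by simp only [hG_def]
        _ = (∫ x, (gridS f D (δ n) (NN n) (cE * x)
              + gridS f' D' (δ n) (NN n) (-(cE * x))) ∂laplaceMeasure)
              - ∫ x, (f 0 + D 0 * (cE * x)) ∂laplaceMeasure := integral_sub haddL haffL
        _ = _ := by rw [integral_add h3.1 h4.1]
    have eaffX : ∫ ω, (f 0 + D 0 * X' ω) ∂μ = f 0 := by
      rw [integral_add (integrable_const _) (hX'int.const_mul _), integral_const,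
        integral_const_mul, hX'mean]
      simp
    have eaffL : ∫ x, (f 0 + D 0 * (cE * x)) ∂laplaceMeasure = f 0 := by
      rw [integral_add (integrable_const _) (hcL.const_mul _), integral_const,
        integral_const_mul, hcLmean]
      simp
    rw [eX, eL, eaffX, eaffL, h1.2, h2.2, h3.2, h4.2, hX'mean, hnegXmean, hcLmean, hcLnegmean]
    have hsum1 : ∀ i ∈ Finset.range (NN n),
        (D (((i:ℝ)+1)*(δ n)) - D ((i:ℝ)*(δ n))) * ∫ ω, max (X' ω - ((i:ℝ)+1)*(δ n)) 0 ∂μ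
          ≤ (D (((i:ℝ)+1)*(δ n)) - D ((i:ℝ)*(δ n)))
              * ∫ x, max (cE * x - ((i:ℝ)+1)*(δ n)) 0 ∂laplaceMeasure := by
      intro i _
      have ht0 : (0:ℝ) ≤ ((i:ℝ)+1)*(δ n) := by positivity
      refine mul_le_mul_of_nonneg_left ?_ (sub_nonneg.2 (hDmono (by nlinarith [hδpos n])))
      have hb := hinge_bound haE hHaE hpE hwE hcE μ X' hX'm hX'int hX'mean hX'tail ht0
      have hv := laplace_hinge_val (c := cE) (u := ((i:ℝ)+1)*(δ n)) hc ht0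
      rw [hv, ← neg_div]
      exact hb
    have hsum2 : ∀ i ∈ Finset.range (NN n),
        (D' (((i:ℝ)+1)*(δ n)) - D' ((i:ℝ)*(δ n))) * ∫ ω, max (-X' ω - ((i:ℝ)+1)*(δ n)) 0 ∂μ
          ≤ (D' (((i:ℝ)+1)*(δ n)) - D' ((i:ℝ)*(δ n)))
              * ∫ x, max (-(cE * x) - ((i:ℝ)+1)*(δ n)) 0 ∂laplaceMeasure := by
      intro i _
      have ht0 : (0:ℝ) ≤ ((i:ℝ)+1)*(δ n) := by positivity
      refine mul_le_mul_of_nonneg_left ?_ (sub_nonneg.2 (hD'mono (by nlinarith [hδpos n])))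
      have hb := hinge_bound haE hHaE hpE hwE hcE μ (fun ω => -X' ω) hX'm.neg hnegX
        hnegXmean hnegXtail ht0
      have hneg : ∫ x, max (-(cE * x) - ((i:ℝ)+1)*(δ n)) 0 ∂laplaceMeasure
          = ∫ x, max (cE * x - ((i:ℝ)+1)*(δ n)) 0 ∂laplaceMeasure := by
        have h := laplace_comp_neg (fun y => max (cE * y - ((i:ℝ)+1)*(δ n)) 0)
        simp only [mul_neg] at h
        exact h
      rw [hneg]
      have hv := laplace_hinge_val (c := cE) (u := ((i:ℝ)+1)*(δ n)) hc ht0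
      rw [hv, ← neg_div]
      exact hb
    have hS1 := Finset.sum_le_sum hsum1
    have hS2 := Finset.sum_le_sum hsum2
    linarith [hS1, hS2]
  -- comparison with f on the Laplace side
  have hGL_int : ∀ n, Integrable (fun x => G n (cE * x)) laplaceMeasure := by
    intro n
    have h3 := gridS_integral laplaceMeasure hcL f D (δ n) (NN n)
    have h4 := gridS_integral laplaceMeasure hcLneg f' D' (δ n) (NN n)
    have haffL : Integrable (fun x => f 0 + D 0 * (cE * x)) laplaceMeasure :=
      (integrable_const _).add (hcL.const_mul _)
    exact (h3.1.add h4.1).sub haffL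
  have hkey2 : ∀ n, ∫ x, G n (cE * x) ∂laplaceMeasure ≤ ∫ x, f (cE * x) ∂laplaceMeasure :=
    fun n => integral_mono (hGL_int n) hfL (fun x => hGle n (cE * x))
  -- dominated convergence on the X side
  have hGcont : ∀ n, Continuous (G n) := by
    intro n
    simp only [hG_def]
    exact ((gridS_cont _).add ((gridS_cont _).comp continuous_neg)).sub
      (continuous_const.add (continuous_const.mul continuous_id))
  have hbound_int : Integrable (fun ω => |f (X' ω)| + |f 0 + D 0 * X' ω|) μ :=
    hfX'.abs.add haffX.abs
  have htendX : Tendsto (fun n => ∫ ω, G n (X' ω) ∂μ) atTop (nhds (∫ ω, f (X' ω) ∂μ)) := by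
    refine tendsto_integral_of_dominated_convergence _
      (fun n => ((hGcont n).comp_aestronglyMeasurable hX'm.aestronglyMeasurable))
      hbound_int ?_ ?_
    · intro n
      filter_upwards with ω
      have h1 := hGle n (X' ω)
      have h2 := hGge n (X' ω)
      rw [Real.norm_eq_abs, abs_le]
      constructor
      · have := neg_abs_le (f 0 + D 0 * X' ω)
        have := abs_nonneg (f (X' ω))
        linarith
      · have := le_abs_self (f (X' ω))
        have := abs_nonneg (f 0 + D 0 * X' ω)
        linarith
    · filter_upwards with ω
      exact hGconv (X' ω)
  exact le_of_tendsto htendX (Eventually.of_forall (fun n => (hcomp n).trans (hkey2 n)))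

end assembly
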